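/- arXiv:2102.10155 — 2 statements merged into one kernel-verified Lean document; each statement's English description precedes it below -/
import Mathlib

section
/- Let q \ge 3 and d \le e. For all 0 \le i \le d-1 and 1 \le j \le d, the eigenvalues of the bilinear forms graph satisfy |B_j(i)| > |B_j(i+1)|. -/
/-- The Gaussian binomial coefficient `[m choose l]_q = ∏_{t=1}^{l} (q^{m-t+1}-1)/(q^t-1)`. -/
def gaussBinom (q : ℚ) (m l : ℕ) : ℚ :=
  ∏ t ∈ Finset.range l, (q ^ (m - t) - 1) / (q ^ (t + 1) - 1)

/-- The `h`-th term of the eigenvalue expression for the bilinear forms graph `H_q(d,e,j)`: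
`T_h(i,j) = (-1)^{j-h} q^{eh + C(j-h,2)} [d-h, d-j]_q [d-i, h]_q`. -/
def bilinT (q : ℚ) (d e j i h : ℕ) : ℚ :=
  (-1 : ℚ) ^ (j - h) * q ^ (e * h + (j - h).choose 2) *
    gaussBinom q (d - h) (d - j) * gaussBinom q (d - i) h

/-- The eigenvalue `B_j(i)` of the bilinear forms graph `H_q(d,e,j)`. -/
def bilinB (q : ℚ) (d e j i : ℕ) : ℚ :=
  ∑ h ∈ Finset.range (min j (d - i) + 1), bilinT q d e j i h

section Aux

variable {q : ℚ}

lemma pow_sub_one_pos (hq : 1 < q) {n : ℕ} (hn : 1 ≤ n) : 0 < q ^ n - 1 := by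
  have : 1 < q ^ n := one_lt_pow₀ hq (by omega)
  linarith

lemma pow_mul_sub_le (hq : 1 ≤ q) {n : ℕ} (hn : 1 ≤ n) : q ^ (n - 1) * (q - 1) ≤ q ^ n - 1 := by
  have h1 : (1 : ℚ) ≤ q ^ (n - 1) := one_le_pow₀ hq
  have h2 : q ^ (n - 1) * q = q ^ n := by rw [← pow_succ]; congr 1; omega
  nlinarith

lemma gb_pos (hq : 1 < q) {m l : ℕ} (h : l ≤ m) : 0 < gaussBinom q m l := by
  unfold gaussBinom
  apply Finset.prod_pos
  intro t ht
  simp only [Finset.mem_range] at ht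
  have h1 : 0 < q ^ (m - t) - 1 := pow_sub_one_pos hq (by omega)
  have h2 : 0 < q ^ (t + 1) - 1 := pow_sub_one_pos hq (by omega)
  positivity

lemma gb_succ (m l : ℕ) :
    gaussBinom q m (l + 1) = gaussBinom q m l * ((q ^ (m - l) - 1) / (q ^ (l + 1) - 1)) :=
  Finset.prod_range_succ _ _

lemma gb_step (hq : 1 < q) {m l : ℕ} (h : l ≤ m) :
    gaussBinom q (m + 1) l * (q ^ (m + 1 - l) - 1) = gaussBinom q m l * (q ^ (m + 1) - 1) := by
  induction l with
  | zero => simp [gaussBinom]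
  | succ n ih =>
    have ih' := ih (by omega)
    have hne : q ^ (n + 1) - 1 ≠ 0 := ne_of_gt (pow_sub_one_pos hq (by omega))
    have hmn : m + 1 - (n + 1) = m - n := by omega
    have hmn2 : m + 1 - n = (m - n) + 1 := by omega
    rw [gb_succ, gb_succ, hmn, hmn2]
    rw [hmn2] at ih'
    field_simp
    linear_combination (q ^ (m - n) - 1) * ih'

lemma gb_self (hq : 1 < q) (m : ℕ) : gaussBinom q m m = 1 := by
  unfold gaussBinom
  rw [Finset.prod_div_distrib]
  have h1 : ∏ t ∈ Finset.range m, (q ^ (m - t) - 1) = ∏ t ∈ Finset.range m, (q ^ (t + 1) - 1) := by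
    rw [← Finset.prod_range_reflect]
    apply Finset.prod_congr rfl
    intro t ht
    simp only [Finset.mem_range] at ht
    congr 2
    omega
  rw [h1]
  apply div_self
  apply ne_of_gt
  apply Finset.prod_pos
  intro t ht
  exact pow_sub_one_pos hq (by omega)

lemma gb_pascal (hq : 1 < q) {m h : ℕ} (h1 : 1 ≤ h) (h2 : h + 1 ≤ m) :
    gaussBinom q m h = gaussBinom q (m - 1) h + q ^ (m - h) * gaussBinom q (m - 1) (h - 1) := by
  have hstep : gaussBinom q m h * (q ^ (m - h) - 1) = gaussBinom q (m - 1) h * (q ^ m - 1) := by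
    have := gb_step hq (q := q) (m := m - 1) (l := h) (by omega)
    rw [show m - 1 + 1 = m by omega] at this
    exact this
  have hsucc' : gaussBinom q (m - 1) h * (q ^ h - 1)
      = gaussBinom q (m - 1) (h - 1) * (q ^ (m - h) - 1) := by
    have heq : gaussBinom q (m - 1) h
        = gaussBinom q (m - 1) (h - 1) * ((q ^ (m - h) - 1) / (q ^ h - 1)) := by
      have := gb_succ (q := q) (m - 1) (h - 1)
      rw [show h - 1 + 1 = h by omega, show m - 1 - (h - 1) = m - h by omega] at this
      exact this
    have hB : q ^ h - 1 ≠ 0 := ne_of_gt (pow_sub_one_pos hq (by omega))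
    rw [heq]; field_simp
  have hA : q ^ (m - h) - 1 ≠ 0 := ne_of_gt (pow_sub_one_pos hq (by omega))
  have hB : q ^ h - 1 ≠ 0 := ne_of_gt (pow_sub_one_pos hq (by omega))
  have hkey : q ^ (m - h) * q ^ h = q ^ m := by rw [← pow_add]; congr 1; omega
  have h3 : gaussBinom q m h * (q ^ h - 1) = gaussBinom q (m - 1) (h - 1) * (q ^ m - 1) := by
    apply mul_right_cancel₀ hA
    linear_combination (q ^ h - 1) * hstep + (q ^ m - 1) * hsucc'
  apply mul_right_cancel₀ hB
  linear_combination h3 - hsucc' - gaussBinom q (m - 1) (h - 1) * hkey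

/-! alternating sums -/

def altA (f : ℕ → ℚ) (n : ℕ) : ℚ := ∑ h ∈ Finset.range (n + 1), (-1 : ℚ) ^ (n - h) * f h

lemma altA_zero (f : ℕ → ℚ) : altA f 0 = f 0 := by simp [altA]

lemma altA_succ (f : ℕ → ℚ) (n : ℕ) : altA f (n + 1) = f (n + 1) - altA f n := by
  unfold altA
  rw [Finset.sum_range_succ]
  have h1 : ∀ h ∈ Finset.range (n + 1), (-1 : ℚ) ^ (n + 1 - h) * f h = -((-1) ^ (n - h) * f h) := by
    intro h hh
    simp only [Finset.mem_range] at hh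
    rw [show n + 1 - h = (n - h) + 1 by omega, pow_succ]
    ring
  rw [Finset.sum_congr rfl h1, Finset.sum_neg_distrib]
  simp
  ring

lemma altA_bounds (f : ℕ → ℚ) (n : ℕ) (h0 : ∀ h ≤ n, 0 ≤ f h)
    (hm : ∀ h < n, f h ≤ f (h + 1)) : 0 ≤ altA f n ∧ altA f n ≤ f n := by
  induction n with
  | zero => rw [altA_zero]; exact ⟨h0 0 le_rfl, le_rfl⟩
  | succ n ih =>
    obtain ⟨ih1, ih2⟩ := ih (fun h hh => h0 h (by omega)) (fun h hh => hm h (by omega))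
    rw [altA_succ]
    constructor
    · have := hm n (by omega)
      linarith
    · linarith

lemma altA_half (f : ℕ → ℚ) (n : ℕ) (h0 : ∀ h ≤ n, 0 < f h)
    (hm : ∀ h < n, 2 * f h ≤ f (h + 1)) : f n / 2 ≤ altA f n := by
  cases n with
  | zero => rw [altA_zero]; linarith [h0 0 le_rfl]
  | succ n =>
    rw [altA_succ]
    have hb := altA_bounds f n (fun h hh => (h0 h (by omega)).le)
      (fun h hh => by linarith [hm h (by omega), (h0 h (by omega)).le])
    have h2 := hm n (by omega)
    linarith [hb.2]

lemma altA_add (f g : ℕ → ℚ) (n : ℕ) :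
    altA (fun h => f h + g h) n = altA f n + altA g n := by
  simp [altA, mul_add, Finset.sum_add_distrib]

lemma altA_sub (f g : ℕ → ℚ) (n : ℕ) :
    altA (fun h => f h - g h) n = altA f n - altA g n := by
  simp [altA, mul_sub, Finset.sum_sub_distrib]

lemma altA_congr {f g : ℕ → ℚ} {n : ℕ} (hfg : ∀ h ≤ n, f h = g h) : altA f n = altA g n := by
  unfold altA
  apply Finset.sum_congr rfl
  intro h hh
  simp only [Finset.mem_range] at hh
  rw [hfg h (by omega)]

end Aux

section Main2
variable {q : ℚ}

/-- magnitude of the `h`-th term -/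
def aT (q : ℚ) (d e j i h : ℕ) : ℚ :=
  q ^ (e * h + (j - h).choose 2) * (gaussBinom q (d - h) (d - j) * gaussBinom q (d - i) h)

/-- magnitude of the `h`-th difference term -/
def cT (q : ℚ) (d e j i h : ℕ) : ℚ :=
  q ^ (e * h + (j - h).choose 2 + (d - i - h)) *
    (gaussBinom q (d - h) (d - j) * gaussBinom q (d - i - 1) (h - 1))

lemma choose2_succ (n : ℕ) : (n + 1).choose 2 = n.choose 2 + n := by
  have := Nat.choose_succ_succ n 1
  simp [Nat.choose_one_right] at this
  omega

lemma aT_pos (hq : 1 < q) {d e j i h : ℕ} (hh1 : h ≤ j) (hjd : j ≤ d) (hh2 : h ≤ d - i) :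
    0 < aT q d e j i h := by
  have g1 := gb_pos hq (q := q) (show d - j ≤ d - h by omega)
  have g2 := gb_pos hq (q := q) hh2
  have hq0 : (0:ℚ) < q := by linarith
  unfold aT
  positivity

lemma cT_pos (hq : 1 < q) {d e j i h : ℕ} (h1 : 1 ≤ h) (h2 : h ≤ j) (h3 : j ≤ d - i - 1)
    (hjd : j ≤ d) : 0 < cT q d e j i h := by
  have g1 := gb_pos hq (q := q) (show d - j ≤ d - h by omega)
  have g2 := gb_pos hq (q := q) (show h - 1 ≤ d - i - 1 by omega)
  have hq0 : (0:ℚ) < q := by linarith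
  unfold cT
  positivity

lemma aT_succ (hq : 1 < q) {d e j i h : ℕ} (hde : d ≤ e) (hj : h + 1 ≤ j) (hjd : j ≤ d)
    (hh : h + 1 ≤ d - i) :
    aT q d e j i (h + 1) * ((q ^ (d - h) - 1) * (q ^ (h + 1) - 1)) =
    aT q d e j i h * (q ^ (e - (j - h - 1)) * ((q ^ (j - h) - 1) * (q ^ (d - i - h) - 1))) := by
  have hne1 : q ^ (d - h) - 1 ≠ 0 := ne_of_gt (pow_sub_one_pos hq (by omega))
  have hne2 : q ^ (h + 1) - 1 ≠ 0 := ne_of_gt (pow_sub_one_pos hq (by omega))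
  -- exponent identity
  have pe : q ^ (e * (h + 1) + (j - (h + 1)).choose 2)
      = q ^ (e * h + (j - h).choose 2) * q ^ (e - (j - h - 1)) := by
    rw [← pow_add]
    congr 1
    have hch : (j - h).choose 2 = (j - h - 1).choose 2 + (j - h - 1) := by
      obtain ⟨u, hu⟩ : ∃ u, j - h = u + 1 := ⟨j - h - 1, by omega⟩
      rw [hu, show u + 1 - 1 = u by omega, choose2_succ]
    rw [show j - (h + 1) = j - h - 1 by omega, Nat.mul_succ]
    omega
  -- binomial in m step
  have g1 : gaussBinom q (d - (h + 1)) (d - j)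
      = gaussBinom q (d - h) (d - j) * (q ^ (j - h) - 1) / (q ^ (d - h) - 1) := by
    have := gb_step hq (q := q) (m := d - h - 1) (l := d - j) (by omega)
    rw [show d - h - 1 + 1 = d - h by omega, show d - h - (d - j) = j - h by omega] at this
    rw [show d - (h + 1) = d - h - 1 by omega]
    field_simp
    linarith [this]
  -- binomial in l step
  have g2 : gaussBinom q (d - i) (h + 1)
      = gaussBinom q (d - i) h * (q ^ (d - i - h) - 1) / (q ^ (h + 1) - 1) := by
    rw [gb_succ]; ring
  unfold aT
  rw [g1, g2, pe]
  field_simp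

lemma numM (hq : 3 ≤ q) {d e i j h : ℕ} (hde : d ≤ e) (hjd : j ≤ d) (hj : h + 1 ≤ j)
    (hh : h + 1 ≤ d - i) :
    (q ^ (d - h) - 1) * (q ^ (h + 1) - 1) <
      q ^ (e - (j - h - 1)) * ((q ^ (j - h) - 1) * (q ^ (d - i - h) - 1)) := by
  have h1q : (1:ℚ) < q := by linarith
  have h0q : (0:ℚ) < q := by linarith
  have e1 : q ^ (j - h - 1) * (q - 1) ≤ q ^ (j - h) - 1 := pow_mul_sub_le (by linarith) (by omega)
  have e2 : q ^ (d - i - h - 1) * (q - 1) ≤ q ^ (d - i - h) - 1 :=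
    pow_mul_sub_le (by linarith) (by omega)
  have p1 : q ^ (e - (j - h - 1)) * (q ^ (j - h - 1) * q ^ (d - i - h - 1))
      = q ^ (e + (d - i - h - 1)) := by
    rw [← pow_add, ← pow_add]; congr 1; omega
  have l2 : q ^ (d - h) * q ^ (h + 1) = q ^ (d + 1) := by rw [← pow_add]; congr 1; omega
  have w1 : q ^ d ≤ q ^ (e + (d - i - h - 1)) := pow_le_pow_right₀ (by linarith) (by omega)
  have w2 : q ≤ (q - 1) ^ 2 := by nlinarith
  have hdpos : (0:ℚ) < q ^ d := by positivity
  calc (q ^ (d - h) - 1) * (q ^ (h + 1) - 1)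
      < q ^ (d - h) * q ^ (h + 1) := by
        have a1 : 0 < q ^ (d - h) - 1 := pow_sub_one_pos h1q (by omega)
        have a2 : 0 < q ^ (h + 1) - 1 := pow_sub_one_pos h1q (by omega)
        have b1 : q ^ (d - h) - 1 < q ^ (d - h) := by linarith
        have b2 : q ^ (h + 1) - 1 < q ^ (h + 1) := by linarith
        exact mul_lt_mul'' b1 b2 a1.le a2.le
    _ = q ^ d * q := by rw [l2, pow_succ]
    _ ≤ q ^ (e + (d - i - h - 1)) * (q - 1) ^ 2 := by
        apply mul_le_mul w1 w2 (by linarith) (by positivity)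
    _ = q ^ (e - (j - h - 1)) * ((q ^ (j - h - 1) * (q - 1)) * (q ^ (d - i - h - 1) * (q - 1))) := by
        rw [← p1]; ring
    _ ≤ q ^ (e - (j - h - 1)) * ((q ^ (j - h) - 1) * (q ^ (d - i - h) - 1)) := by
        have hA : (0:ℚ) < q ^ (e - (j - h - 1)) := by positivity
        apply mul_le_mul_of_nonneg_left _ hA.le
        have n1 : (0:ℚ) ≤ q ^ (d - i - h - 1) * (q - 1) := by
          have := pow_pos h0q (d - i - h - 1); nlinarith
        have n2 : (0:ℚ) ≤ q ^ (j - h) - 1 := (pow_sub_one_pos h1q (by omega)).le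
        exact mul_le_mul e1 e2 n1 n2
  -- done

lemma aT_mono (hq : 3 ≤ q) {d e j i h : ℕ} (hde : d ≤ e) (hjd : j ≤ d) (hj : h + 1 ≤ j)
    (hh : h + 1 ≤ d - i) : aT q d e j i h ≤ aT q d e j i (h + 1) := by
  have h1q : (1:ℚ) < q := by linarith
  have key := aT_succ h1q hde hj hjd hh (q := q) (i := i)
  have hD : 0 < (q ^ (d - h) - 1) * (q ^ (h + 1) - 1) := by
    have a1 := pow_sub_one_pos h1q (n := d - h) (by omega)
    have a2 := pow_sub_one_pos h1q (n := h + 1) (by omega)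
    positivity
  have hN := numM hq hde hjd hj hh (q := q)
  have ha : 0 < aT q d e j i h := aT_pos h1q (by omega) hjd (by omega)
  have h1 : aT q d e j i h * ((q ^ (d - h) - 1) * (q ^ (h + 1) - 1))
      < aT q d e j i (h + 1) * ((q ^ (d - h) - 1) * (q ^ (h + 1) - 1)) := by
    rw [key]
    exact mul_lt_mul_of_pos_left hN ha
  exact le_of_lt (lt_of_mul_lt_mul_right h1 hD.le)


lemma cT_succ (hq : 1 < q) {d e j i h : ℕ} (hde : d ≤ e) (hjd : j ≤ d) (h0 : 1 ≤ h)
    (hj : h + 1 ≤ j) (h3 : j ≤ d - i - 1) :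
    cT q d e j i (h + 1) * ((q ^ (d - h) - 1) * (q ^ h - 1)) =
    cT q d e j i h * (q ^ (e - (j - h)) * ((q ^ (j - h) - 1) * (q ^ (d - i - h) - 1))) := by
  have hne1 : q ^ (d - h) - 1 ≠ 0 := ne_of_gt (pow_sub_one_pos hq (by omega))
  have hne2 : q ^ h - 1 ≠ 0 := ne_of_gt (pow_sub_one_pos hq (by omega))
  have pe : q ^ (e * (h + 1) + (j - (h + 1)).choose 2 + (d - i - (h + 1)))
      = q ^ (e * h + (j - h).choose 2 + (d - i - h)) * q ^ (e - (j - h)) := by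
    rw [← pow_add]
    congr 1
    have hch : (j - h).choose 2 = (j - h - 1).choose 2 + (j - h - 1) := by
      obtain ⟨u, hu⟩ : ∃ u, j - h = u + 1 := ⟨j - h - 1, by omega⟩
      rw [hu, show u + 1 - 1 = u by omega, choose2_succ]
    rw [show j - (h + 1) = j - h - 1 by omega, Nat.mul_succ]
    omega
  have g1 : gaussBinom q (d - (h + 1)) (d - j)
      = gaussBinom q (d - h) (d - j) * (q ^ (j - h) - 1) / (q ^ (d - h) - 1) := by
    have := gb_step hq (q := q) (m := d - h - 1) (l := d - j) (by omega)
    rw [show d - h - 1 + 1 = d - h by omega, show d - h - (d - j) = j - h by omega] at this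
    rw [show d - (h + 1) = d - h - 1 by omega]
    field_simp
    linarith [this]
  have g2 : gaussBinom q (d - i - 1) (h + 1 - 1)
      = gaussBinom q (d - i - 1) (h - 1) * (q ^ (d - i - h) - 1) / (q ^ h - 1) := by
    have := gb_succ (q := q) (d - i - 1) (h - 1)
    rw [show h - 1 + 1 = h by omega, show d - i - 1 - (h - 1) = d - i - h by omega] at this
    rw [show h + 1 - 1 = h by omega, this]
    ring
  unfold cT
  rw [g1, g2, pe]
  field_simp

lemma numM2 (hq : 3 ≤ q) {d e i j h : ℕ} (hde : d ≤ e) (hjd : j ≤ d) (h0 : 1 ≤ h)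
    (hj : h + 1 ≤ j) (h3 : j ≤ d - i - 1) :
    2 * ((q ^ (d - h) - 1) * (q ^ h - 1)) <
      q ^ (e - (j - h)) * ((q ^ (j - h) - 1) * (q ^ (d - i - h) - 1)) := by
  have h1q : (1:ℚ) < q := by linarith
  have h0q : (0:ℚ) < q := by linarith
  have e1 : q ^ (j - h - 1) * (q - 1) ≤ q ^ (j - h) - 1 := pow_mul_sub_le (by linarith) (by omega)
  have e2 : q ^ (d - i - h - 1) * (q - 1) ≤ q ^ (d - i - h) - 1 :=
    pow_mul_sub_le (by linarith) (by omega)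
  have p1 : q ^ (e - (j - h)) * (q ^ (j - h - 1) * q ^ (d - i - h - 1))
      = q ^ (e + (d - i - h - 2)) := by
    rw [← pow_add, ← pow_add]; congr 1; omega
  have l2 : q ^ (d - h) * q ^ h = q ^ d := by rw [← pow_add]; congr 1; omega
  have w1 : q ^ d ≤ q ^ (e + (d - i - h - 2)) := pow_le_pow_right₀ (by linarith) (by omega)
  have w2 : (2:ℚ) ≤ (q - 1) ^ 2 := by nlinarith
  have hdpos : (0:ℚ) < q ^ d := by positivity
  calc 2 * ((q ^ (d - h) - 1) * (q ^ h - 1))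
      < 2 * (q ^ (d - h) * q ^ h) := by
        have a1 : 0 < q ^ (d - h) - 1 := pow_sub_one_pos h1q (by omega)
        have a2 : 0 < q ^ h - 1 := pow_sub_one_pos h1q (by omega)
        have b1 : q ^ (d - h) - 1 < q ^ (d - h) := by linarith
        have b2 : q ^ h - 1 < q ^ h := by linarith
        have := mul_lt_mul'' b1 b2 a1.le a2.le
        linarith
    _ = 2 * q ^ d := by rw [l2]
    _ ≤ q ^ (e + (d - i - h - 2)) * (q - 1) ^ 2 := by
        have := mul_le_mul w1 w2 (by norm_num) (by positivity)
        linarith [this]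
    _ = q ^ (e - (j - h)) * ((q ^ (j - h - 1) * (q - 1)) * (q ^ (d - i - h - 1) * (q - 1))) := by
        rw [← p1]; ring
    _ ≤ q ^ (e - (j - h)) * ((q ^ (j - h) - 1) * (q ^ (d - i - h) - 1)) := by
        have hA : (0:ℚ) < q ^ (e - (j - h)) := by positivity
        have n1 : (0:ℚ) ≤ q ^ (d - i - h - 1) * (q - 1) := by
          have := pow_pos h0q (d - i - h - 1); nlinarith
        have n2 : (0:ℚ) ≤ q ^ (j - h) - 1 := (pow_sub_one_pos h1q (by omega)).le
        exact mul_le_mul_of_nonneg_left (mul_le_mul e1 e2 n1 n2) hA.le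

lemma cT_mono2 (hq : 3 ≤ q) {d e j i h : ℕ} (hde : d ≤ e) (hjd : j ≤ d) (h0 : 1 ≤ h)
    (hj : h + 1 ≤ j) (h3 : j ≤ d - i - 1) :
    2 * cT q d e j i h ≤ cT q d e j i (h + 1) := by
  have h1q : (1:ℚ) < q := by linarith
  have key := cT_succ h1q hde hjd h0 hj h3 (q := q) (i := i) (e := e)
  have hD : 0 < (q ^ (d - h) - 1) * (q ^ h - 1) := by
    have a1 := pow_sub_one_pos h1q (n := d - h) (by omega)
    have a2 := pow_sub_one_pos h1q (n := h) (by omega)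
    positivity
  have hN := numM2 hq hde hjd h0 hj h3 (q := q) (e := e)
  have hc : 0 < cT q d e j i h := cT_pos h1q h0 (by omega) h3 hjd
  have h1 : (2 * cT q d e j i h) * ((q ^ (d - h) - 1) * (q ^ h - 1))
      < cT q d e j i (h + 1) * ((q ^ (d - h) - 1) * (q ^ h - 1)) := by
    rw [key]
    calc (2 * cT q d e j i h) * ((q ^ (d - h) - 1) * (q ^ h - 1))
        = cT q d e j i h * (2 * ((q ^ (d - h) - 1) * (q ^ h - 1))) := by ring
      _ < cT q d e j i h * (q ^ (e - (j - h)) * ((q ^ (j - h) - 1) * (q ^ (d - i - h) - 1))) :=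
          mul_lt_mul_of_pos_left hN hc
  exact le_of_lt (lt_of_mul_lt_mul_right h1 hD.le)

lemma aT_diff (hq : 1 < q) {d e j i h : ℕ} (h1 : 1 ≤ h) (h2 : h ≤ j) (h3 : j ≤ d - i - 1)
    (hjd : j ≤ d) (hid : i + 1 ≤ d) :
    aT q d e j i h - aT q d e j (i + 1) h = cT q d e j i h := by
  have hp := gb_pascal hq (q := q) (m := d - i) (h := h) h1 (by omega)
  unfold aT cT
  rw [show d - (i + 1) = d - i - 1 by omega, hp, pow_add]
  ring


lemma numNN (hq : 3 ≤ q) {d e j k' : ℕ} (hde : d ≤ e) (hjd : j ≤ d) (hkj : k' + 1 ≤ j) :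
    (q ^ (d - k') - 1) * (q ^ (k' + 1) + q - 2) <
      q ^ (e - (j - k' - 1)) * ((q ^ (j - k') - 1) * (q - 1)) := by
  have h1q : (1:ℚ) < q := by linarith
  have h0q : (0:ℚ) < q := by linarith
  have e1 : q ^ (j - k' - 1) * (q - 1) ≤ q ^ (j - k') - 1 :=
    pow_mul_sub_le (by linarith) (by omega)
  have p1 : q ^ (e - (j - k' - 1)) * q ^ (j - k' - 1) = q ^ e := by
    rw [← pow_add]; congr 1; omega
  have w1 : q ^ d ≤ q ^ e := pow_le_pow_right₀ (by linarith) hde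
  have step1 : q ^ e * (q - 1) ^ 2 ≤ q ^ (e - (j - k' - 1)) * ((q ^ (j - k') - 1) * (q - 1)) := by
    calc q ^ e * (q - 1) ^ 2
        = q ^ (e - (j - k' - 1)) * ((q ^ (j - k' - 1) * (q - 1)) * (q - 1)) := by
          rw [← p1]; ring
      _ ≤ q ^ (e - (j - k' - 1)) * ((q ^ (j - k') - 1) * (q - 1)) := by
          have hA : (0:ℚ) < q ^ (e - (j - k' - 1)) := by positivity
          apply mul_le_mul_of_nonneg_left _ hA.le
          apply mul_le_mul_of_nonneg_right e1 (by linarith)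
  have step2 : (q ^ (d - k') - 1) * (q ^ (k' + 1) + q - 2) < q ^ e * (q - 1) ^ 2 := by
    rcases Nat.eq_zero_or_pos k' with hk0 | hk1
    · subst hk0
      simp only [Nat.sub_zero, pow_one, zero_add]
      have hd1 : (1:ℚ) ≤ q ^ d := one_le_pow₀ (by linarith)
      have hdpos : (0:ℚ) < q ^ d := by positivity
      -- (q^d - 1)*(2q - 2) < q^e (q-1)^2
      have f1 : q ^ d * (q - 1) ^ 2 ≤ q ^ e * (q - 1) ^ 2 :=
        mul_le_mul_of_nonneg_right w1 (sq_nonneg _)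
      have f2 : (0:ℚ) ≤ q ^ d * ((q - 1) * (q - 3)) :=
        mul_nonneg hdpos.le (mul_nonneg (by linarith) (by linarith))
      nlinarith [f1, f2]
    · have a1 : 0 < q ^ (d - k') - 1 := pow_sub_one_pos h1q (by omega)
      have b2 : (0:ℚ) < q ^ (k' + 1) + q - 2 := by
        have : (1:ℚ) ≤ q ^ (k' + 1) := one_le_pow₀ (by linarith)
        linarith
      have l1 : (q ^ (d - k') - 1) * (q ^ (k' + 1) + q - 2)
          < q ^ (d - k') * (q ^ (k' + 1) + q) := by
        have b1 : q ^ (d - k') - 1 < q ^ (d - k') := by linarith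
        have b3 : q ^ (k' + 1) + q - 2 < q ^ (k' + 1) + q := by linarith
        exact mul_lt_mul'' b1 b3 a1.le b2.le
      have l2 : q ^ (d - k') * q ^ (k' + 1) = q ^ (d + 1) := by rw [← pow_add]; congr 1; omega
      have l3 : q ^ (d - k') * q = q ^ (d - k' + 1) := by rw [← pow_succ]
      have l4 : q ^ (d - k' + 1) ≤ q ^ d := pow_le_pow_right₀ (by linarith) (by omega)
      have l5 : q ^ (d + 1) = q ^ d * q := pow_succ q d
      have w2 : q + 1 ≤ (q - 1) ^ 2 := by nlinarith
      have hdpos : (0:ℚ) < q ^ d := by positivity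
      -- q^{d-k'}(q^{k'+1}+q) = q^{d+1} + q^{d-k'+1} ≤ q^d q + q^d = q^d(q+1) ≤ q^d (q-1)^2 ≤ q^e (q-1)^2
      have : q ^ (d - k') * (q ^ (k' + 1) + q) ≤ q ^ d * (q + 1) := by
        rw [mul_add, l2, l3, l5]
        linarith
      nlinarith [w1, sq_nonneg (q - 1)]
  linarith

lemma keyB (hq : 3 ≤ q) {d e j i k' : ℕ} (hde : d ≤ e) (hjd : j ≤ d)
    (hk : d - i = k' + 1) (hkj : k' + 1 ≤ j) :
    aT q d e j i k' + aT q d e j (i + 1) k' < aT q d e j i (k' + 1) := by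
  have h1q : (1:ℚ) < q := by linarith
  have hq1ne : q - 1 ≠ 0 := by intro h; nlinarith
  have hid : i + 1 ≤ d := by omega
  have hGb : 0 < gaussBinom q (d - k' - 1) (d - j) := gb_pos h1q (by omega)
  have hwne : 0 < q ^ (j - k') - 1 := pow_sub_one_pos h1q (by omega)
  -- s1 : G(k'+1,k') (q-1) = q^{k'+1} - 1
  have s1 : gaussBinom q (k' + 1) k' * (q - 1) = q ^ (k' + 1) - 1 := by
    have := gb_step h1q (q := q) (m := k') (l := k') le_rfl
    rw [show k' + 1 - k' = 1 by omega, pow_one, gb_self h1q, one_mul] at this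
    exact this
  -- s2
  have s2 : gaussBinom q (d - k') (d - j) * (q ^ (j - k') - 1)
      = gaussBinom q (d - k' - 1) (d - j) * (q ^ (d - k') - 1) := by
    have := gb_step h1q (q := q) (m := d - k' - 1) (l := d - j) (by omega)
    rw [show d - k' - 1 + 1 = d - k' by omega, show d - k' - (d - j) = j - k' by omega] at this
    exact this
  -- s3 exponent
  have s3 : q ^ (e * (k' + 1) + (j - (k' + 1)).choose 2)
      = q ^ (e * k' + (j - k').choose 2) * q ^ (e - (j - k' - 1)) := by
    rw [← pow_add]
    congr 1
    have hch : (j - k').choose 2 = (j - k' - 1).choose 2 + (j - k' - 1) := by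
      obtain ⟨u, hu⟩ : ∃ u, j - k' = u + 1 := ⟨j - k' - 1, by omega⟩
      rw [hu, show u + 1 - 1 = u by omega, choose2_succ]
    rw [show j - (k' + 1) = j - k' - 1 by omega, Nat.mul_succ]
    omega
  have u1 : aT q d e j i k'
      = q ^ (e * k' + (j - k').choose 2) *
        (gaussBinom q (d - k') (d - j) * gaussBinom q (k' + 1) k') := by
    unfold aT; rw [hk]
  have u2 : aT q d e j (i + 1) k'
      = q ^ (e * k' + (j - k').choose 2) * gaussBinom q (d - k') (d - j) := by
    unfold aT
    rw [show d - (i + 1) = k' by omega, gb_self h1q]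
    ring
  have u3 : aT q d e j i (k' + 1)
      = q ^ (e * k' + (j - k').choose 2) *
        (q ^ (e - (j - k' - 1)) * gaussBinom q (d - k' - 1) (d - j)) := by
    unfold aT
    rw [hk, gb_self h1q, s3, show d - (k' + 1) = d - k' - 1 by omega]
    ring
  have hpos2 : 0 < (q - 1) * (q ^ (j - k') - 1) := by
    apply mul_pos (by linarith) hwne
  have lhs_eq : (aT q d e j i k' + aT q d e j (i + 1) k') * ((q - 1) * (q ^ (j - k') - 1))
      = q ^ (e * k' + (j - k').choose 2) * gaussBinom q (d - k' - 1) (d - j) *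
        ((q ^ (d - k') - 1) * (q ^ (k' + 1) + q - 2)) := by
    rw [u1, u2]
    linear_combination (q ^ (e * k' + (j - k').choose 2) * gaussBinom q (d - k') (d - j) *
        (q ^ (j - k') - 1)) * s1 +
      (q ^ (e * k' + (j - k').choose 2) * (q ^ (k' + 1) + q - 2)) * s2
  have rhs_eq : aT q d e j i (k' + 1) * ((q - 1) * (q ^ (j - k') - 1))
      = q ^ (e * k' + (j - k').choose 2) * gaussBinom q (d - k' - 1) (d - j) *
        (q ^ (e - (j - k' - 1)) * ((q ^ (j - k') - 1) * (q - 1))) := by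
    rw [u3]; ring
  have hposE : 0 < q ^ (e * k' + (j - k').choose 2) * gaussBinom q (d - k' - 1) (d - j) := by
    have : (0:ℚ) < q := by linarith
    positivity
  have key : (aT q d e j i k' + aT q d e j (i + 1) k') * ((q - 1) * (q ^ (j - k') - 1))
      < aT q d e j i (k' + 1) * ((q - 1) * (q ^ (j - k') - 1)) := by
    rw [lhs_eq, rhs_eq]
    exact mul_lt_mul_of_pos_left (numNN hq hde hjd hkj) hposE
  exact lt_of_mul_lt_mul_right key hpos2.le

lemma bilinB_eq (q : ℚ) (d e j i M : ℕ) (hM : min j (d - i) = M) (hMj : M ≤ j) :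
    bilinB q d e j i = (-1 : ℚ) ^ (j - M) * altA (fun h => aT q d e j i h) M := by
  unfold bilinB altA
  rw [hM, Finset.mul_sum]
  apply Finset.sum_congr rfl
  intro h hh
  simp only [Finset.mem_range] at hh
  have hTa : bilinT q d e j i h = (-1 : ℚ) ^ (j - h) * aT q d e j i h := by
    unfold bilinT aT; ring
  rw [hTa, show j - h = (j - M) + (M - h) by omega, pow_add]
  ring

theorem bilinB_abs_strict_anti (q d e i j : ℕ) (hq : 3 ≤ q) (hde : d ≤ e)
    (hi : i ≤ d - 1) (hj1 : 1 ≤ j) (hj2 : j ≤ d) :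
    |bilinB (q : ℚ) d e j (i + 1)| < |bilinB (q : ℚ) d e j i| := by
  have hq' : (3 : ℚ) ≤ (q : ℚ) := by exact_mod_cast hq
  have h1q : (1 : ℚ) < (q : ℚ) := by linarith
  have hd1 : 1 ≤ d := le_trans hj1 hj2
  have hid : i + 1 ≤ d := by omega
  by_cases hcase : j ≤ d - i - 1
  · -- Case A : both sums have top index j, both positive
    have hmin1 : min j (d - i) = j := min_eq_left (by omega)
    have hmin2 : min j (d - (i + 1)) = j := min_eq_left (by omega)
    rw [bilinB_eq _ _ _ _ _ _ hmin1 le_rfl, bilinB_eq _ _ _ _ _ _ hmin2 le_rfl]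
    simp only [Nat.sub_self, pow_zero, one_mul]
    have hb' := altA_bounds (fun h => aT (q : ℚ) d e j (i + 1) h) j
      (fun h hh => (aT_pos h1q hh hj2 (by omega)).le)
      (fun h hh => aT_mono hq' hde hj2 (by omega) (by omega))
    have hdiff : altA (fun h => aT (q : ℚ) d e j i h) j
        - altA (fun h => aT (q : ℚ) d e j (i + 1) h) j
        = altA (fun t => cT (q : ℚ) d e j i (t + 1)) (j - 1) := by
      rw [← altA_sub]
      unfold altA
      rw [Finset.sum_range_succ']
      have hz : aT (q : ℚ) d e j i 0 - aT (q : ℚ) d e j (i + 1) 0 = 0 := by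
        unfold aT gaussBinom
        simp
      calc (∑ t ∈ Finset.range j, (-1 : ℚ) ^ (j - (t + 1)) *
              (aT (q : ℚ) d e j i (t + 1) - aT (q : ℚ) d e j (i + 1) (t + 1))) +
            (-1 : ℚ) ^ (j - 0) * (aT (q : ℚ) d e j i 0 - aT (q : ℚ) d e j (i + 1) 0)
          = ∑ t ∈ Finset.range j, (-1 : ℚ) ^ (j - 1 - t) * cT (q : ℚ) d e j i (t + 1) := by
            rw [hz, mul_zero, add_zero]
            apply Finset.sum_congr rfl
            intro t ht
            simp only [Finset.mem_range] at ht
            rw [show j - (t + 1) = j - 1 - t by omega,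
              aT_diff h1q (by omega) (by omega) hcase hj2 hid]
        _ = ∑ h ∈ Finset.range (j - 1 + 1), (-1 : ℚ) ^ (j - 1 - h) * cT (q : ℚ) d e j i (h + 1) := by
            rw [show j - 1 + 1 = j by omega]
    have hhalf := altA_half (fun t => cT (q : ℚ) d e j i (t + 1)) (j - 1)
      (fun t ht => cT_pos h1q (by omega) (by omega) hcase hj2)
      (fun t ht => cT_mono2 hq' hde hj2 (by omega) (by omega) hcase)
    have hcj : 0 < cT (q : ℚ) d e j i (j - 1 + 1) :=
      cT_pos h1q (by omega) (by omega) hcase hj2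
    have hlt : altA (fun h => aT (q : ℚ) d e j (i + 1) h) j
        < altA (fun h => aT (q : ℚ) d e j i h) j := by
      beta_reduce at hhalf hdiff hb' ⊢
      linarith
    rw [abs_of_nonneg hb'.1, abs_of_nonneg (le_trans hb'.1 hlt.le)]
    exact hlt
  · -- Case B : j ≥ d - i
    obtain ⟨k', hk⟩ : ∃ k', d - i = k' + 1 := ⟨d - i - 1, by omega⟩
    have hkj : k' + 1 ≤ j := by omega
    have hmin1 : min j (d - i) = k' + 1 := by rw [hk]; exact min_eq_right (by omega)
    have hmin2 : min j (d - (i + 1)) = k' := by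
      rw [show d - (i + 1) = k' by omega]; exact min_eq_right (by omega)
    rw [bilinB_eq _ _ _ _ _ _ hmin1 (by omega), bilinB_eq _ _ _ _ _ _ hmin2 (by omega)]
    rw [abs_mul, abs_mul, abs_pow, abs_pow, abs_neg, abs_one, one_pow, one_pow, one_mul, one_mul]
    have hbounds1 := altA_bounds (fun h => aT (q : ℚ) d e j i h) (k' + 1)
      (fun h hh => (aT_pos h1q (by omega) hj2 (by omega)).le)
      (fun h hh => aT_mono hq' hde hj2 (by omega) (by omega))
    have hbounds2 := altA_bounds (fun h => aT (q : ℚ) d e j (i + 1) h) k'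
      (fun h hh => (aT_pos h1q (by omega) hj2 (by omega)).le)
      (fun h hh => aT_mono hq' hde hj2 (by omega) (by omega))
    rw [abs_of_nonneg hbounds1.1, abs_of_nonneg hbounds2.1]
    rw [altA_succ]
    have hboundsum := altA_bounds
      (fun h => aT (q : ℚ) d e j i h + aT (q : ℚ) d e j (i + 1) h) k'
      (fun h hh => add_nonneg (aT_pos h1q (by omega) hj2 (by omega)).le
        (aT_pos h1q (by omega) hj2 (by omega)).le)
      (fun h hh => add_le_add (aT_mono hq' hde hj2 (by omega) (by omega))
        (aT_mono hq' hde hj2 (by omega) (by omega)))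
    have hsum := altA_add (fun h => aT (q : ℚ) d e j i h) (fun h => aT (q : ℚ) d e j (i + 1) h) k'
    have hkey := keyB hq' hde hj2 hk hkj (e := e)
    beta_reduce at hboundsum hsum ⊢
    linarith [hboundsum.2]


end Main2
end

section
/- Let q \ge 3, or q = 2 and d \ne e (with d \le e). For each 1 \le j \le d, the value B_j(d-j+1) is the smallest among B_j(0), B_j(1), ..., B_j(d), i.e., it is the smallest eigenvalue of the distance-j bilinear forms graph H_q(d,e,j). -/
lemma den_pos (q : ℚ) (hq : 2 ≤ q) (t : ℕ) : 0 < q ^ (t + 1) - 1 := by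
  have : (1:ℚ) < q ^ (t+1) := by
    calc (1:ℚ) < 2 := by norm_num
    _ ≤ q := hq
    _ = q ^ 1 := (pow_one q).symm
    _ ≤ q ^ (t+1) := pow_le_pow_right₀ (by linarith) (by omega)
  linarith

lemma num_pos (q : ℚ) (hq : 2 ≤ q) {k : ℕ} (hk : 1 ≤ k) : 0 < q ^ k - 1 := by
  have : (1:ℚ) < q ^ k := by
    calc (1:ℚ) < 2 := by norm_num
    _ ≤ q := hq
    _ = q ^ 1 := (pow_one q).symm
    _ ≤ q ^ k := pow_le_pow_right₀ (by linarith) hk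
  linarith

lemma gauss_pos (q : ℚ) (hq : 2 ≤ q) {m l : ℕ} (h : l ≤ m) : 0 < gaussBinom q m l := by
  unfold gaussBinom
  apply Finset.prod_pos
  intro t ht
  have ht' : t < l := Finset.mem_range.mp ht
  exact div_pos (num_pos q hq (by omega)) (den_pos q hq t)

lemma gauss_eq_div (q : ℚ) (m l : ℕ) :
    gaussBinom q m l = (∏ t ∈ Finset.range l, (q ^ (m - t) - 1)) /
      (∏ t ∈ Finset.range l, (q ^ (t + 1) - 1)) := by
  unfold gaussBinom
  rw [Finset.prod_div_distrib]

lemma prodA (q : ℚ) (m l : ℕ) :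
    (∏ t ∈ Finset.range l, (q ^ (m + 1 - t) - 1)) * (q ^ (m + 1 - l) - 1) =
      (q ^ (m + 1) - 1) * ∏ t ∈ Finset.range l, (q ^ (m - t) - 1) := by
  rw [← Finset.prod_range_succ]
  rw [Finset.prod_range_succ' (fun t => (q ^ (m + 1 - t) - 1)) l]
  simp only [Nat.succ_sub_succ, Nat.sub_zero]
  ring

lemma gauss_succ_left (q : ℚ) (hq : 2 ≤ q) (m l : ℕ) :
    gaussBinom q (m+1) l * (q ^ (m + 1 - l) - 1) = gaussBinom q m l * (q ^ (m + 1) - 1) := by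
  rw [gauss_eq_div, gauss_eq_div]
  have hD : (∏ t ∈ Finset.range l, (q ^ (t + 1) - 1)) ≠ 0 := by
    apply ne_of_gt; exact Finset.prod_pos fun t _ => den_pos q hq t
  field_simp
  rw [prodA]
  ring

lemma gauss_succ_right (q : ℚ) (m l : ℕ) :
    gaussBinom q m (l+1) = gaussBinom q m l * ((q ^ (m - l) - 1) / (q ^ (l + 1) - 1)) := by
  unfold gaussBinom
  rw [Finset.prod_range_succ]

lemma gauss_self (q : ℚ) (hq : 2 ≤ q) (m : ℕ) : gaussBinom q m m = 1 := by
  rw [gauss_eq_div]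
  have : (∏ t ∈ Finset.range m, (q ^ (m - t) - 1)) = ∏ t ∈ Finset.range m, (q ^ (t + 1) - 1) := by
    rw [← Finset.prod_range_reflect (fun t => (q ^ (t + 1) - 1)) m]
    apply Finset.prod_congr rfl
    intro t ht
    have : t < m := Finset.mem_range.mp ht
    congr 2
    omega
  rw [this]
  apply div_self
  apply ne_of_gt; exact Finset.prod_pos fun t _ => den_pos q hq t

lemma gauss_zero (q : ℚ) (m : ℕ) : gaussBinom q m 0 = 1 := by
  unfold gaussBinom; simp

/-- magnitude of the `h`-th term -/
def tm (q : ℚ) (d e j i h : ℕ) : ℚ :=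
  q ^ (e * h + (j - h).choose 2) * (gaussBinom q (d - h) (d - j) * gaussBinom q (d - i) h)

lemma bilinT_eq_tm (q : ℚ) (d e j i h : ℕ) :
    bilinT q d e j i h = (-1 : ℚ) ^ (j - h) * tm q d e j i h := by
  unfold bilinT tm; ring

lemma tm_pos (q : ℚ) (hq : 2 ≤ q) {d e j i h : ℕ} (hj : j ≤ d) (hh : h ≤ j)
    (hhi : h ≤ d - i) : 0 < tm q d e j i h := by
  unfold tm
  have h1 : 0 < gaussBinom q (d - h) (d - j) := gauss_pos q hq (by omega)
  have h2 : 0 < gaussBinom q (d - i) h := gauss_pos q hq hhi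
  positivity

/-- exact recurrence: tm(h+1) * (Q^{d-h}-1)(Q^{h+1}-1) Q^{j-h}
    = tm h * (Q^{j-h}-1)(Q^{d-i-h}-1) Q^{e+1} -/
lemma tm_rec (q : ℚ) (hq : 2 ≤ q) {d e j i h : ℕ} (hj : j ≤ d) (hh : h + 1 ≤ j)
    (hhi : h + 1 ≤ d - i) (hi : i ≤ d) :
    tm q d e j i (h+1) * ((q ^ (d - h) - 1) * (q ^ (h + 1) - 1) * q ^ (j - h)) =
      tm q d e j i h * ((q ^ (j - h) - 1) * (q ^ (d - i - h) - 1) * q ^ (e + 1)) := by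
  unfold tm
  -- exponent identity
  have hexp : e * h + (j - h).choose 2 + (e + 1) =
      e * (h + 1) + (j - (h+1)).choose 2 + (j - h) := by
    have ha : j - h = (j - (h+1)) + 1 := by omega
    rw [ha, Nat.choose_succ_succ, Nat.choose_one_right]
    ring
  -- gauss relations
  have hg1 : gaussBinom q (d - h) (d - j) * (q ^ (j - h) - 1) =
      gaussBinom q (d - (h+1)) (d - j) * (q ^ (d - h) - 1) := by
    have h0 := gauss_succ_left q hq (d - (h+1)) (d - j)
    have e2 : d - (h + 1) + 1 - (d - j) = j - h := by omega
    have e1 : d - (h + 1) + 1 = d - h := by omega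
    rw [e2, e1] at h0
    linarith [h0]
  have hg2 : gaussBinom q (d - i) (h+1) * (q ^ (h + 1) - 1) =
      gaussBinom q (d - i) h * (q ^ (d - i - h) - 1) := by
    rw [gauss_succ_right q (d - i) h]
    have hd : (q ^ (h + 1) - 1) ≠ 0 := ne_of_gt (den_pos q hq h)
    field_simp
  have hq1 : q ^ (e * h + (j - h).choose 2) * q ^ (e + 1) =
      q ^ (e * (h + 1) + (j - (h+1)).choose 2) * q ^ (j - h) := by
    rw [← pow_add, ← pow_add, hexp]
  linear_combination (- q ^ (e * (h + 1) + (j - (h+1)).choose 2) * q ^ (j - h) *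
      (gaussBinom q (d - i) (h+1) * (q ^ (h + 1) - 1))) * hg1 +
    (q ^ (e * (h + 1) + (j - (h+1)).choose 2) * q ^ (j - h) *
      (gaussBinom q (d - h) (d - j) * (q ^ (j - h) - 1))) * hg2 +
    (- gaussBinom q (d - h) (d - j) * gaussBinom q (d - i) h * (q ^ (j - h) - 1) *
      (q ^ (d - i - h) - 1)) * hq1

lemma keyK (q : ℚ) (hq : 2 ≤ q) (d e a b x y : ℕ) (hde : d ≤ e)
    (hc : 3 ≤ q ∨ (q = 2 ∧ d + 1 ≤ e)) (ha : 1 ≤ a) (hb : 1 ≤ b)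
    (hx : 1 ≤ x) (hy : 1 ≤ y) (hxy : x + y = d + 1) :
    q ^ a * ((q ^ x - 1) * (q ^ y - 1)) < q ^ (e + 1) * ((q ^ a - 1) * (q ^ b - 1)) := by
  have hq0 : (0:ℚ) < q := by linarith
  have hq1 : (1:ℚ) ≤ q := by linarith
  have step1 : q ^ a * ((q ^ x - 1) * (q ^ y - 1)) < q ^ (a + d + 1) := by
    have e1 : q ^ a * (q ^ x * q ^ y) = q ^ (a + d + 1) := by
      rw [← pow_add, ← pow_add]; congr 1; omega
    have h1 : 0 < q ^ x - 1 := num_pos q hq hx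
    have h2 : 0 < q ^ y - 1 := num_pos q hq hy
    have h3 : (0:ℚ) < q ^ a := pow_pos hq0 a
    nlinarith [pow_pos hq0 x, pow_pos hq0 y]
  have step2 : q ^ (a + d + 1) ≤ (q - 1) ^ 2 * q ^ (e + a + b - 1) := by
    rcases hc with h3 | ⟨h2, hde1⟩
    · have hsq : q ≤ (q - 1) ^ 2 := by nlinarith
      have hm : q ^ (a + d) ≤ q ^ (e + a + b - 1) :=
        pow_le_pow_right₀ hq1 (by omega)
      calc q ^ (a + d + 1) = q * q ^ (a + d) := by rw [pow_succ]; ring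
      _ ≤ (q - 1) ^ 2 * q ^ (a + d) := by
          have := pow_pos hq0 (a + d); nlinarith
      _ ≤ (q - 1) ^ 2 * q ^ (e + a + b - 1) := by nlinarith [hm, sq_nonneg (q-1)]
    · subst h2
      have hm : (2:ℚ) ^ (a + d + 1) ≤ (2:ℚ) ^ (e + a + b - 1) :=
        pow_le_pow_right₀ (by norm_num) (by omega)
      norm_num
      linarith
  have step3 : (q - 1) ^ 2 * q ^ (e + a + b - 1) ≤ q ^ (e + 1) * ((q ^ a - 1) * (q ^ b - 1)) := by
    have ha1 : q ^ (a - 1) * (q - 1) ≤ q ^ a - 1 := by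
      have e1 : q ^ a = q ^ (a - 1) * q := by rw [← pow_succ]; congr 1; omega
      have h1 : (1:ℚ) ≤ q ^ (a - 1) := one_le_pow₀ hq1
      nlinarith
    have hb1 : q ^ (b - 1) * (q - 1) ≤ q ^ b - 1 := by
      have e1 : q ^ b = q ^ (b - 1) * q := by rw [← pow_succ]; congr 1; omega
      have h1 : (1:ℚ) ≤ q ^ (b - 1) := one_le_pow₀ hq1
      nlinarith
    have epos : (0:ℚ) < q ^ (e + 1) := pow_pos hq0 _
    have e2 : q ^ (e + 1) * (q ^ (a - 1) * (q - 1) * (q ^ (b - 1) * (q - 1))) =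
        (q - 1) ^ 2 * q ^ (e + a + b - 1) := by
      rw [show e + a + b - 1 = (e + 1) + (a - 1) + (b - 1) by omega, pow_add, pow_add]
      ring
    have hA : (0:ℚ) < q ^ (a - 1) * (q - 1) := by
      have := pow_pos hq0 (a - 1); nlinarith
    have hB : (0:ℚ) < q ^ (b - 1) * (q - 1) := by
      have := pow_pos hq0 (b - 1); nlinarith
    calc (q - 1) ^ 2 * q ^ (e + a + b - 1)
        = q ^ (e + 1) * (q ^ (a - 1) * (q - 1) * (q ^ (b - 1) * (q - 1))) := e2.symm
      _ ≤ q ^ (e + 1) * ((q ^ a - 1) * (q ^ b - 1)) := by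
          apply mul_le_mul_of_nonneg_left _ (le_of_lt epos)
          apply mul_le_mul ha1 hb1 (le_of_lt hB)
          nlinarith
  linarith

lemma tm_lt (q : ℚ) (hq : 2 ≤ q) {d e j i h : ℕ} (hde : d ≤ e)
    (hc : 3 ≤ q ∨ (q = 2 ∧ d + 1 ≤ e)) (hj : j ≤ d) (hh : h + 1 ≤ j)
    (hhi : h + 1 ≤ d - i) (hi : i ≤ d) :
    tm q d e j i h < tm q d e j i (h + 1) := by
  have hrec := tm_rec q hq (e := e) hj hh hhi hi
  have hP : (0:ℚ) < (q ^ (d - h) - 1) * (q ^ (h + 1) - 1) * q ^ (j - h) := by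
    have h1 := num_pos q hq (show 1 ≤ d - h by omega)
    have h2 := num_pos q hq (show 1 ≤ h + 1 by omega)
    have h3 : (0:ℚ) < q ^ (j - h) := pow_pos (by linarith) _
    positivity
  have hNP : (q ^ (d - h) - 1) * (q ^ (h + 1) - 1) * q ^ (j - h) <
      (q ^ (j - h) - 1) * (q ^ (d - i - h) - 1) * q ^ (e + 1) := by
    have := keyK q hq d e (j - h) (d - i - h) (d - h) (h + 1) hde hc
      (by omega) (by omega) (by omega) (by omega) (by omega)
    nlinarith [this]
  have ht : 0 < tm q d e j i h := tm_pos q hq hj (by omega) (by omega)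
  have : tm q d e j i h * ((q ^ (d - h) - 1) * (q ^ (h + 1) - 1) * q ^ (j - h)) <
      tm q d e j i (h + 1) * ((q ^ (d - h) - 1) * (q ^ (h + 1) - 1) * q ^ (j - h)) := by
    rw [hrec]
    exact mul_lt_mul_of_pos_left hNP ht
  exact lt_of_mul_lt_mul_right this (le_of_lt hP)

/-- top-term function `f i = tm i (d-i)` decreases by a factor ≥ 2 on `[d-j+1, d-1]`. -/
lemma f_half (q : ℚ) (hq : 2 ≤ q) {d e j i : ℕ} (hde : d ≤ e)
    (hc : 3 ≤ q ∨ (q = 2 ∧ d + 1 ≤ e)) (hj1 : 1 ≤ j) (hj : j ≤ d)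
    (hi1 : d - j + 1 ≤ i) (hi2 : i + 1 ≤ d) :
    2 * tm q d e j (i + 1) (d - (i + 1)) ≤ tm q d e j i (d - i) := by
  have hq0 : (0:ℚ) < q := by linarith
  have hq1 : (1:ℚ) ≤ q := by linarith
  set k := i + j - d with hk
  have hk1 : 1 ≤ k := by omega
  -- identities for f i and f (i+1)
  have hfi : tm q d e j i (d - i) = q ^ (e * (d - i) + k.choose 2) * gaussBinom q i (d - j) := by
    unfold tm
    rw [show d - (d - i) = i by omega, show j - (d - i) = k by omega,
      gauss_self q hq, mul_one]
  have hfi1 : tm q d e j (i + 1) (d - (i + 1)) =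
      q ^ (e * (d - (i + 1)) + (k + 1).choose 2) * gaussBinom q (i + 1) (d - j) := by
    unfold tm
    rw [show d - (d - (i + 1)) = i + 1 by omega, show j - (d - (i + 1)) = k + 1 by omega,
      gauss_self q hq, mul_one]
  -- gauss relation: G(i+1,d-j)*(q^(k+1)-1) = G(i,d-j)*(q^(i+1)-1)
  have hg : gaussBinom q (i + 1) (d - j) * (q ^ (k + 1) - 1) =
      gaussBinom q i (d - j) * (q ^ (i + 1) - 1) := by
    have h0 := gauss_succ_left q hq i (d - j)
    rwa [show i + 1 - (d - j) = k + 1 by omega] at h0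
  -- exponent identity: e*(d-i) + C(k,2) + k = e*(d-(i+1)) + C(k+1,2) + e
  have hexp : q ^ (e * (d - i) + k.choose 2) * q ^ k =
      q ^ (e * (d - (i + 1)) + (k + 1).choose 2) * q ^ e := by
    rw [← pow_add, ← pow_add]
    congr 1
    rw [Nat.choose_succ_succ, Nat.choose_one_right]
    have : d - i = (d - (i + 1)) + 1 := by omega
    rw [this]; ring
  -- the inequality 2 q^k (q^(i+1)-1) ≤ q^e (q^(k+1)-1)
  have hkey : 2 * (q ^ k * (q ^ (i + 1) - 1)) ≤ q ^ e * (q ^ (k + 1) - 1) := by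
    have h1 : q ^ (k + 1) - 1 ≥ q ^ k * (q - 1) := by
      have : (1:ℚ) ≤ q ^ k := one_le_pow₀ hq1
      rw [pow_succ]; nlinarith
    have h2 : q ^ k * (q ^ (i + 1) - 1) < q ^ (k + i + 1) := by
      have : q ^ k * q ^ (i + 1) = q ^ (k + i + 1) := by rw [← pow_add, Nat.add_assoc]
      nlinarith [pow_pos hq0 k]
    have h3 : 2 * q ^ (k + i + 1) ≤ q ^ e * (q ^ k * (q - 1)) := by
      have e3 : q ^ e * (q ^ k * (q - 1)) = q ^ (e + k) * (q - 1) := by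
        rw [pow_add]; ring
      rcases hc with h3q | ⟨h2q, hde1⟩
      · have hm : q ^ (k + i + 1) ≤ q ^ (e + k) := pow_le_pow_right₀ hq1 (by omega)
        have : (0:ℚ) < q ^ (k + i + 1) := pow_pos hq0 _
        nlinarith
      · subst h2q
        have hm : (2:ℚ) ^ (k + i + 1 + 1) ≤ (2:ℚ) ^ (e + k) :=
          pow_le_pow_right₀ (by norm_num) (by omega)
        rw [e3]
        rw [pow_succ] at hm
        norm_num at hm ⊢
        linarith
    have h4 : (0:ℚ) < q ^ e := pow_pos hq0 e
    nlinarith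
  -- combine
  rw [hfi, hfi1]
  have hGpos : 0 < gaussBinom q (i + 1) (d - j) := gauss_pos q hq (by omega)
  have hGpos' : 0 < gaussBinom q i (d - j) := gauss_pos q hq (by omega)
  have hnum : (0:ℚ) < q ^ (k + 1) - 1 := num_pos q hq (by omega)
  have hnum' : (0:ℚ) < q ^ (i + 1) - 1 := num_pos q hq (by omega)
  -- goal: 2 * (q^{E1} G') ≤ q^{E0} G
  -- multiply both sides by (q^(k+1)-1) * q^? ... use: 2 * q^{E1} G' * (q^(k+1)-1) * q^e
  rw [← mul_le_mul_iff_of_pos_right (mul_pos hnum (pow_pos hq0 e))]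
  calc 2 * (q ^ (e * (d - (i + 1)) + (k + 1).choose 2) * gaussBinom q (i + 1) (d - j)) *
        ((q ^ (k + 1) - 1) * q ^ e)
      = 2 * ((q ^ (e * (d - (i + 1)) + (k + 1).choose 2) * q ^ e) *
          (gaussBinom q (i + 1) (d - j) * (q ^ (k + 1) - 1))) := by ring
    _ = 2 * ((q ^ (e * (d - i) + k.choose 2) * q ^ k) *
          (gaussBinom q i (d - j) * (q ^ (i + 1) - 1))) := by rw [← hexp, hg]
    _ = (2 * (q ^ k * (q ^ (i + 1) - 1))) *
          (q ^ (e * (d - i) + k.choose 2) * gaussBinom q i (d - j)) := by ring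
    _ ≤ (q ^ e * (q ^ (k + 1) - 1)) *
          (q ^ (e * (d - i) + k.choose 2) * gaussBinom q i (d - j)) := by
        apply mul_le_mul_of_nonneg_right hkey
        positivity
    _ = q ^ (e * (d - i) + k.choose 2) * gaussBinom q i (d - j) *
          ((q ^ (k + 1) - 1) * q ^ e) := by ring

/-- ratio at the top of `i₀ = d-j+1`: `4·tm(j-2) ≤ 3·tm(j-1)`. -/
lemma t2step (q : ℚ) (hq : 2 ≤ q) {d e j : ℕ} (hde : d ≤ e)
    (hc : 3 ≤ q ∨ (q = 2 ∧ d + 1 ≤ e)) (hj2 : 2 ≤ j) (hj : j ≤ d) :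
    4 * tm q d e j (d - j + 1) (j - 2) ≤ 3 * tm q d e j (d - j + 1) (j - 1) := by
  have hq0 : (0:ℚ) < q := by linarith
  have hq1 : (1:ℚ) ≤ q := by linarith
  have hrec := tm_rec q hq (d := d) (e := e) (j := j) (i := d - j + 1) (h := j - 2)
    hj (by omega) (by omega) (by omega)
  rw [show j - 2 + 1 = j - 1 by omega, show d - (j - 2) = d - j + 2 by omega,
    show j - (j - 2) = 2 by omega, show d - (d - j + 1) - (j - 2) = 1 by omega] at hrec
  have hkey : 4 * ((q ^ (d - j + 2) - 1) * (q ^ (j - 1) - 1) * q ^ 2) ≤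
      3 * ((q ^ 2 - 1) * (q ^ 1 - 1) * q ^ (e + 1)) := by
    have hA : (0:ℚ) < q ^ (d - j + 2) - 1 := num_pos q hq (by omega)
    have hB : (0:ℚ) < q ^ (j - 1) - 1 := num_pos q hq (by omega)
    have e4 : q ^ (d - j + 2) * q ^ (j - 1) * q ^ 2 = q ^ (d + 3) := by
      rw [← pow_add, ← pow_add]; congr 1; omega
    have hL : (q ^ (d - j + 2) - 1) * (q ^ (j - 1) - 1) * q ^ 2 ≤ q ^ (d + 3) := by
      nlinarith [pow_pos hq0 (d - j + 2), pow_pos hq0 (j - 1), pow_pos hq0 2]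
    rcases hc with h3q | ⟨h2q, hde1⟩
    · have hm : q ^ (d + 1) ≤ q ^ (e + 1) := pow_le_pow_right₀ hq1 (by omega)
      have e5 : q ^ (d + 3) = q ^ 2 * q ^ (d + 1) := by
        rw [show d + 3 = 2 + (d + 1) by omega, pow_add]
      have hcoef : 4 * q ^ 2 ≤ 3 * ((q ^ 2 - 1) * (q ^ 1 - 1)) := by nlinarith
      have hd1 : (0:ℚ) < q ^ (d + 1) := pow_pos hq0 _
      have hfac : (0:ℚ) ≤ (q ^ 2 - 1) * (q ^ 1 - 1) := by nlinarith
      calc 4 * ((q ^ (d - j + 2) - 1) * (q ^ (j - 1) - 1) * q ^ 2) ≤ 4 * q ^ (d + 3) := by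
            linarith
        _ = (4 * q ^ 2) * q ^ (d + 1) := by rw [e5]; ring
        _ ≤ (3 * ((q ^ 2 - 1) * (q ^ 1 - 1))) * q ^ (d + 1) := by
            apply mul_le_mul_of_nonneg_right hcoef (le_of_lt hd1)
        _ ≤ (3 * ((q ^ 2 - 1) * (q ^ 1 - 1))) * q ^ (e + 1) := by nlinarith
        _ = 3 * ((q ^ 2 - 1) * (q ^ 1 - 1) * q ^ (e + 1)) := by ring
    · subst h2q
      have hm : (2:ℚ) ^ (d + 3) ≤ (2:ℚ) ^ (e + 2) := pow_le_pow_right₀ (by norm_num) (by omega)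
      have e6 : (2:ℚ) ^ (e + 2) = 2 * 2 ^ (e + 1) := by rw [pow_succ]; ring
      have h7 : (0:ℚ) < 2 ^ (e + 1) := pow_pos (by norm_num) _
      norm_num
      calc 4 * ((2 ^ (d - j + 2) - 1) * ((2:ℚ) ^ (j - 1) - 1) * 2 ^ 2) ≤ 4 * 2 ^ (d + 3) := by
            linarith
        _ ≤ 4 * 2 ^ (e + 2) := by linarith
        _ = 8 * 2 ^ (e + 1) := by rw [e6]; ring
        _ ≤ 3 * (3 * 2 ^ (e + 1)) := by linarith

  have hP : (0:ℚ) < (q ^ (d - j + 2) - 1) * (q ^ (j - 1) - 1) * q ^ 2 := by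
    have h1 := num_pos q hq (show 1 ≤ d - j + 2 by omega)
    have h2 := num_pos q hq (show 1 ≤ j - 1 by omega)
    exact mul_pos (mul_pos h1 h2) (pow_pos hq0 _)
  have hN : (0:ℚ) < (q ^ 2 - 1) * (q ^ 1 - 1) * q ^ (e + 1) := by
    have h1 := num_pos q hq (show 1 ≤ 2 by omega)
    have h2 := num_pos q hq (show 1 ≤ 1 by omega)
    exact mul_pos (mul_pos h1 h2) (pow_pos hq0 _)
  have ht1 : 0 < tm q d e j (d - j + 1) (j - 1) := tm_pos q hq hj (by omega) (by omega)
  -- from hrec: tm(j-2) = tm(j-1) * P / N;  4 tm(j-2) N = 4 tm(j-1) P ≤ 3 tm(j-1) N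
  rw [← mul_le_mul_iff_of_pos_right hN]
  calc 4 * tm q d e j (d - j + 1) (j - 2) * ((q ^ 2 - 1) * (q ^ 1 - 1) * q ^ (e + 1))
      = 4 * (tm q d e j (d - j + 1) (j - 2) * ((q ^ 2 - 1) * (q ^ 1 - 1) * q ^ (e + 1))) := by
        ring
    _ = 4 * (tm q d e j (d - j + 1) (j - 1) *
          ((q ^ (d - j + 2) - 1) * (q ^ (j - 1) - 1) * q ^ 2)) := by rw [← hrec]
    _ ≤ 3 * (tm q d e j (d - j + 1) (j - 1) *
          ((q ^ 2 - 1) * (q ^ 1 - 1) * q ^ (e + 1))) := by nlinarith [hkey, ht1]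
    _ = 3 * tm q d e j (d - j + 1) (j - 1) * ((q ^ 2 - 1) * (q ^ 1 - 1) * q ^ (e + 1)) := by
        ring

def altS (u : ℕ → ℚ) (m : ℕ) : ℚ := ∑ h ∈ Finset.range (m + 1), (-1 : ℚ) ^ (m - h) * u h

lemma altS_succ (u : ℕ → ℚ) (m : ℕ) : altS u (m + 1) = u (m + 1) - altS u m := by
  unfold altS
  rw [Finset.sum_range_succ]
  have hc : ∀ h ∈ Finset.range (m + 1), (-1 : ℚ) ^ (m + 1 - h) * u h
      = -((-1 : ℚ) ^ (m - h) * u h) := by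
    intro h hh
    have hhm : h ≤ m := by have := Finset.mem_range.mp hh; omega
    rw [show m + 1 - h = (m - h) + 1 by omega, pow_succ]
    ring
  rw [Finset.sum_congr rfl hc, Finset.sum_neg_distrib]
  simp
  ring

lemma altS_bounds (u : ℕ → ℚ) (m : ℕ) (hmono : ∀ h, h < m → u h ≤ u (h + 1))
    (h0 : 0 ≤ u 0) : 0 ≤ altS u m ∧ altS u m ≤ u m := by
  induction m with
  | zero => unfold altS; simp [h0]
  | succ n ih =>
    obtain ⟨ih1, ih2⟩ := ih (fun h hh => hmono h (by omega))
    rw [altS_succ]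
    have hun : u n ≤ u (n + 1) := hmono n (by omega)
    constructor <;> linarith

/-- bridge: `bilinB` as a signed alternating sum of magnitudes. -/
lemma bilinB_eq_altS (q : ℚ) (d e j i : ℕ) (hji : min j (d - i) ≤ j) :
    bilinB q d e j i = (-1 : ℚ) ^ (j - min j (d - i)) * altS (tm q d e j i) (min j (d - i)) := by
  unfold bilinB altS
  rw [Finset.mul_sum]
  apply Finset.sum_congr rfl
  intro h hh
  have hhm : h ≤ min j (d - i) := by have := Finset.mem_range.mp hh; omega
  rw [bilinT_eq_tm]
  have : (-1 : ℚ) ^ (j - h) = (-1 : ℚ) ^ (j - min j (d - i)) * (-1 : ℚ) ^ (min j (d - i) - h) := by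
    rw [← pow_add]
    congr 1
    omega
  rw [this]
  ring

theorem bilinB_smallest (q d e j : ℕ) (hde : d ≤ e)
    (hq : 3 ≤ q ∨ (q = 2 ∧ d ≠ e)) (hj1 : 1 ≤ j) (hj2 : j ≤ d) :
    ∀ i ≤ d, bilinB (q : ℚ) d e j (d - j + 1) ≤ bilinB (q : ℚ) d e j i := by
  intro i hi
  have hq2n : 2 ≤ q := by rcases hq with h | ⟨h, _⟩ <;> omega
  have hQ2 : (2:ℚ) ≤ (q:ℚ) := by exact_mod_cast hq2n
  have hc : 3 ≤ (q:ℚ) ∨ ((q:ℚ) = 2 ∧ d + 1 ≤ e) := by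
    rcases hq with h | ⟨h2, hne⟩
    · left; exact_mod_cast h
    · right
      constructor
      · rw [h2]; norm_num
      · omega
  set Q : ℚ := (q : ℚ) with hQ
  -- facts about i₀ = d - j + 1
  have hmin0 : min j (d - (d - j + 1)) = j - 1 := by omega
  have hB0 : bilinB Q d e j (d - j + 1)
      = (-1 : ℚ) ^ (j - (j - 1)) * altS (tm Q d e j (d - j + 1)) (j - 1) := by
    have h0 := bilinB_eq_altS Q d e j (d - j + 1) (min_le_left _ _)
    rwa [hmin0] at h0
  rw [show j - (j - 1) = 1 by omega, pow_one, neg_one_mul] at hB0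
  -- monotonicity and positivity of magnitudes
  have hmono : ∀ i' ≤ d, ∀ h, h < min j (d - i') →
      tm Q d e j i' h ≤ tm Q d e j i' (h + 1) := by
    intro i' hi' h hh
    exact le_of_lt (tm_lt Q hQ2 hde hc hj2 (by omega) (by omega) hi')
  have hu0 : ∀ i' , i' ≤ d → (0:ℚ) ≤ tm Q d e j i' 0 := by
    intro i' hi'
    exact le_of_lt (tm_pos Q hQ2 hj2 (by omega) (by omega))
  have hb0 := altS_bounds (tm Q d e j (d - j + 1)) (j - 1)
    (by intro h hh; exact hmono (d - j + 1) (by omega) h (by omega))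
    (hu0 (d - j + 1) (by omega))
  -- the value at i
  have hBi : bilinB Q d e j i
      = (-1 : ℚ) ^ (j - min j (d - i)) * altS (tm Q d e j i) (min j (d - i)) :=
    bilinB_eq_altS Q d e j i (min_le_left _ _)
  have hbi := altS_bounds (tm Q d e j i) (min j (d - i))
    (by intro h hh; exact hmono i hi h hh) (hu0 i hi)
  rcases Nat.even_or_odd (j - min j (d - i)) with hev | hod
  · -- even: B(i) ≥ 0 ≥ B(i₀)
    rw [hB0, hBi, Even.neg_one_pow hev, one_mul]
    linarith [hb0.1, hbi.1]
  · -- odd sign at i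
    have hpar : (j - min j (d - i)) % 2 = 1 := Nat.odd_iff.mp hod
    by_cases hii0 : i = d - j + 1
    · subst hii0; exact le_refl _
    · have hige : d - j + 3 ≤ i := by omega
      have hj3 : 3 ≤ j := by omega
      have hmj : min j (d - i) = d - i := by omega
      -- 4 * f(i) ≤ f(i₀)
      have hclaim : ∀ s : ℕ, d - j + 3 + s ≤ d →
          4 * tm Q d e j (d - j + 3 + s) (d - (d - j + 3 + s))
            ≤ tm Q d e j (d - j + 1) (j - 1) := by
        intro s
        induction s with
        | zero =>
          intro hs
          have h1 := f_half Q hQ2 (i := d - j + 1) hde hc hj1 hj2 (by omega) (by omega)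
          have h2 := f_half Q hQ2 (i := d - j + 2) hde hc hj1 hj2 (by omega) (by omega)
          rw [show d - j + 1 + 1 = d - j + 2 by omega, show d - (d - j + 1) = j - 1 by omega]
            at h1
          rw [show d - j + 2 + 1 = d - j + 3 + 0 by omega] at h2
          have hfpos : (0:ℚ) ≤ tm Q d e j (d - j + 2) (d - (d - j + 2)) :=
            le_of_lt (tm_pos Q hQ2 hj2 (by omega) (by omega))
          linarith
        | succ s ih =>
          intro hs
          have ihs := ih (by omega)
          have h1 := f_half Q hQ2 (i := d - j + 3 + s) hde hc hj1 hj2 (by omega) (by omega)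
          rw [show d - j + 3 + s + 1 = d - j + 3 + (s + 1) by omega] at h1
          have hfpos : (0:ℚ) ≤ tm Q d e j (d - j + 3 + s) (d - (d - j + 3 + s)) :=
            le_of_lt (tm_pos Q hQ2 hj2 (by omega) (by omega))
          linarith
      have hfi : 4 * tm Q d e j i (d - i) ≤ tm Q d e j (d - j + 1) (j - 1) := by
        have h0 := hclaim (i - (d - j + 3)) (by omega)
        rwa [show d - j + 3 + (i - (d - j + 3)) = i by omega] at h0
      -- lower bound for altS at i₀ : S₀ ≥ u₀(j-1) / 4
      have hsplit : altS (tm Q d e j (d - j + 1)) (j - 1)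
          = tm Q d e j (d - j + 1) (j - 1) - altS (tm Q d e j (d - j + 1)) (j - 2) := by
        have h0 := altS_succ (tm Q d e j (d - j + 1)) (j - 2)
        rwa [show j - 2 + 1 = j - 1 by omega] at h0
      have hb02 := altS_bounds (tm Q d e j (d - j + 1)) (j - 2)
        (by intro h hh; exact hmono (d - j + 1) (by omega) h (by omega))
        (hu0 (d - j + 1) (by omega))
      have ht2 := t2step Q hQ2 hde hc (by omega) hj2
      have hS0 : tm Q d e j (d - j + 1) (j - 1) / 4 ≤ altS (tm Q d e j (d - j + 1)) (j - 1) := by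
        rw [hsplit]
        linarith [hb02.2]
      -- conclude
      rw [hB0, hBi, Odd.neg_one_pow hod, neg_one_mul, hmj]
      have hup : altS (tm Q d e j i) (d - i) ≤ tm Q d e j i (d - i) := by
        have := hbi.2; rwa [hmj] at this
      linarith
end
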